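/- Let λ ∈ [0,1), let W be a propagation matrix, and let Ψ^{(∞)} be a fixed point of the basic cooperative optimization update T_λ. Then the equilibrium state defines a lower bound function on the objective: for every configuration x, ∑_{i=1}^n Ψ^{(∞)}_i(x_i) ≤ E(x). -/

import Mathlib

open Finset Filter Topology

/-- A propagation matrix: nonnegative entries with unit column sums. -/
def IsPropagationMatrix {n : ℕ} (W : Fin n → Fin n → ℝ) : Prop :=
  (∀ i j, 0 ≤ W i j) ∧ ∀ j, ∑ i, W i j = 1

/-- The basic cooperative optimization update `T_λ`:
`T_λ(Ψ)_i(a) = min_{x : x_i = a} ((1−λ) E_i(x) + λ ∑_j w_{ij} Ψ_j(x_j))`. -/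
noncomputable def coopT {n : ℕ} {D : Fin n → Type} [∀ i, Fintype (D i)]
    [∀ i, Nonempty (D i)]
    (E : Fin n → ((i : Fin n) → D i) → ℝ) (W : Fin n → Fin n → ℝ) (lam : ℝ)
    (Ψ : (i : Fin n) → D i → ℝ) : (i : Fin n) → D i → ℝ :=
  fun i a =>
    Finset.univ.inf' Finset.univ_nonempty
      (fun x : (j : Fin n) → D j =>
        (1 - lam) * E i (Function.update x i a) +
          lam * ∑ j, W i j * Ψ j (Function.update x i a j))

/-- The total objective `E(x) = ∑ i, E_i(x)`. -/
def objective {n : ℕ} {D : Fin n → Type}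
    (E : Fin n → ((i : Fin n) → D i) → ℝ) (x : (i : Fin n) → D i) : ℝ :=
  ∑ i, E i x

/-- `x̃` is a consensus solution with respect to the state `Ψ` and cooperation strength
`lam`: for every `i`, `x̃` globally minimizes the modified sub-objective
`x ↦ (1−λ) E_i(x) + λ ∑_j w_{ij} Ψ_j(x_j)`. -/
def IsConsensusState {n : ℕ} {D : Fin n → Type}
    (E : Fin n → ((i : Fin n) → D i) → ℝ) (W : Fin n → Fin n → ℝ) (lam : ℝ)
    (Ψ : (i : Fin n) → D i → ℝ) (xt : (i : Fin n) → D i) : Prop :=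
  ∀ i, ∀ x : (j : Fin n) → D j,
    (1 - lam) * E i xt + lam * ∑ j, W i j * Ψ j (xt j)
      ≤ (1 - lam) * E i x + lam * ∑ j, W i j * Ψ j (x j)

/-- Any fixed point `Ψ^{(∞)}` of `T_λ` defines a lower bound function
on the objective: `∑_i Ψ^{(∞)}_i(x_i) ≤ E(x)` for every configuration `x`. -/
theorem equilibrium_is_lower_bound (n : ℕ) (hn : 1 ≤ n) (D : Fin n → Type)
    [∀ i, Fintype (D i)] [∀ i, Nonempty (D i)]
    (E : Fin n → ((i : Fin n) → D i) → ℝ) (W : Fin n → Fin n → ℝ)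
    (hW : IsPropagationMatrix W) (lam : ℝ) (hlam0 : 0 ≤ lam) (hlam1 : lam < 1)
    (Ψinf : (i : Fin n) → D i → ℝ) (hfix : coopT E W lam Ψinf = Ψinf) :
    ∀ x : (i : Fin n) → D i, ∑ i, Ψinf i (x i) ≤ objective E x := by
  intro x
  have key : ∀ i, Ψinf i (x i) ≤
      (1 - lam) * E i x + lam * ∑ j, W i j * Ψinf j (x j) := by
    intro i
    conv_lhs => rw [← hfix]
    simpa [coopT, Function.update_eq_self, -Finset.inf'_le_iff] using
      Finset.inf'_le (b := x)
        (fun y : (j : Fin n) → D j =>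
          (1 - lam) * E i (Function.update y i (x i)) +
            lam * ∑ j, W i j * Ψinf j (Function.update y i (x i) j))
        (Finset.mem_univ x)
  have hsum := Finset.sum_le_sum (fun i (_ : i ∈ Finset.univ) => key i)
  have h2 : ∑ i, ((1 - lam) * E i x + lam * ∑ j, W i j * Ψinf j (x j))
      = (1 - lam) * objective E x + lam * ∑ j, Ψinf j (x j) := by
    rw [Finset.sum_add_distrib, ← Finset.mul_sum, ← Finset.mul_sum]
    congr 1
    congr 1
    rw [Finset.sum_comm]
    refine Finset.sum_congr rfl fun j _ => ?_
    rw [← Finset.sum_mul, hW.2 j, one_mul]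
  rw [h2] at hsum
  nlinarith [hsum]
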